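/- Let δ ∈ (0, 1/2) and u > 0. Define h_δ : ℝ → ℝ by h_δ(s) = 0 for s ≤ 0, h_δ(s) = −(δ/(1−δ)) s²/u + s^{1+δ}/(u^δ (1−δ)) for 0 < s < u, and h_δ(s) = s for s ≥ u. Then h_δ is C¹ on ℝ, h_δ(0) = 0, h_δ(u) = u, and for 0 < s < u one has s² (h_δ''(s))² ≤ 50 δ². -/

import Mathlib

open Set Real

lemma hdelta_aux (δ A B : ℝ) (hδ0 : 0 < δ) (hδ : δ < 1 / 2) (hA0 : 0 ≤ A) (hA1 : A ≤ 1)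
    (hB0 : 0 ≤ B) (hB1 : B ≤ 1) :
    (δ / (1 - δ) * (-2 * A + (1 + δ) * B)) ^ 2 ≤ 50 * δ ^ 2 := by
  have h1δ : (0:ℝ) < 1 - δ := by linarith
  have hXl : (-2:ℝ) ≤ -2 * A + (1 + δ) * B := by nlinarith
  have hXu : -2 * A + (1 + δ) * B ≤ 2 := by nlinarith
  have hX2 : (-2 * A + (1 + δ) * B) ^ 2 ≤ 4 := by nlinarith
  have e : (δ / (1 - δ) * (-2 * A + (1 + δ) * B)) ^ 2
      = δ ^ 2 * (-2 * A + (1 + δ) * B) ^ 2 / (1 - δ) ^ 2 := by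
    field_simp
  rw [e, div_le_iff₀ (by positivity)]
  have h4 : (0:ℝ) ≤ 50 * (1 - δ) ^ 2 - 4 := by nlinarith
  nlinarith [mul_le_mul_of_nonneg_left hX2 (sq_nonneg δ), mul_nonneg (sq_nonneg δ) h4]

/-- Properties of the regularization `h_δ` of the positive part (Theorem 4.6): for
`δ ∈ (0, 1/2)` and `u > 0`, the function `h_δ` defined piecewise by `0` for `s ≤ 0`,
`−(δ/(1−δ)) s²/u + s^{1+δ}/(u^δ (1−δ))` for `0 < s < u`, and `s` for `s ≥ u`, is `C¹`
on `ℝ`, satisfies `h_δ(0) = 0` and `h_δ(u) = u`, and obeys `s² (h_δ''(s))² ≤ 50 δ²` for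
`0 < s < u`. -/
theorem hdelta_properties (δ u : ℝ) (hδ0 : 0 < δ) (hδ : δ < 1 / 2) (hu : 0 < u) :
    let h : ℝ → ℝ := fun s =>
      if s ≤ 0 then 0
      else if s < u then -(δ / (1 - δ)) * s ^ 2 / u + s ^ (1 + δ) / (u ^ δ * (1 - δ))
      else s
    ContDiff ℝ 1 h ∧ h 0 = 0 ∧ h u = u ∧
      ∀ s ∈ Ioo (0 : ℝ) u, s ^ 2 * (deriv (deriv h) s) ^ 2 ≤ 50 * δ ^ 2 := by
  intro h
  have h1δ : (0:ℝ) < 1 - δ := by linarith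
  have hune : u ≠ 0 := ne_of_gt hu
  have huδ : (0:ℝ) < u ^ δ := Real.rpow_pos_of_pos hu δ
  set g : ℝ → ℝ := fun s => -(δ / (1 - δ)) * s ^ 2 / u + s ^ (1 + δ) / (u ^ δ * (1 - δ))
    with hgdef
  set G : ℝ → ℝ := fun s => -(δ / (1 - δ)) * (2 * s) / u + (1 + δ) * s ^ δ / (u ^ δ * (1 - δ))
    with hGdef
  have hG : ∀ s : ℝ, HasDerivAt g (G s) s := by
    intro s
    have h1 : HasDerivAt (fun s : ℝ => -(δ / (1 - δ)) * s ^ 2 / u)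
        (-(δ / (1 - δ)) * (2 * s) / u) s := by
      have := ((hasDerivAt_pow 2 s).const_mul (-(δ / (1 - δ)))).div_const u
      refine this.congr_deriv ?_
      push_cast
      ring
    have h2 : HasDerivAt (fun s : ℝ => s ^ (1 + δ) / (u ^ δ * (1 - δ)))
        ((1 + δ) * s ^ δ / (u ^ δ * (1 - δ))) s := by
      have h2' := (Real.hasDerivAt_rpow_const (x := s) (p := 1 + δ)
        (Or.inr (by linarith))).div_const (u ^ δ * (1 - δ))
      have e : 1 + δ - 1 = δ := by ring
      rw [e] at h2'
      exact h2'
    exact h1.add h2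
  set h' : ℝ → ℝ := fun s => if s ≤ 0 then 0 else if s < u then G s else 1 with h'def
  have hg0 : g 0 = 0 := by
    simp [hgdef, Real.zero_rpow (by positivity : (1:ℝ) + δ ≠ 0)]
  have hgu : g u = u := by
    rw [hgdef]
    have : (u:ℝ) ^ (1 + δ) = u * u ^ δ := by
      rw [Real.rpow_add hu, Real.rpow_one]
    simp only [this]
    field_simp
    ring
  have hG0 : G 0 = 0 := by
    simp [hGdef, Real.zero_rpow (ne_of_gt hδ0)]
  have hGu : G u = 1 := by
    rw [hGdef]
    field_simp
    ring
  -- piecewise equalities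
  have hEq1 : ∀ x ∈ Iio (0:ℝ), h x = 0 := fun x hx => by
    simp [h, le_of_lt (mem_Iio.mp hx)]
  have hEq2 : ∀ x ∈ Icc (0:ℝ) u, h x = g x := by
    intro x hx
    rcases eq_or_lt_of_le hx.1 with rfl | hx0
    · simp [h, hg0]
    · rcases eq_or_lt_of_le hx.2 with rfl | hxu
      · simp [h, not_le.mpr hx0, lt_irrefl, hgu]
      · simp [h, hgdef, not_le.mpr hx0, hxu]
  have hEq3 : ∀ x ∈ Ici u, h x = x := fun x hx => by
    simp [h, not_le.mpr (lt_of_lt_of_le hu hx), not_lt.mpr (mem_Ici.mp hx)]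
  have hEq1' : ∀ x ∈ Iio (0:ℝ), h' x = 0 := fun x hx => by
    simp [h'def, le_of_lt (mem_Iio.mp hx)]
  have hEq2' : ∀ x ∈ Icc (0:ℝ) u, h' x = G x := by
    intro x hx
    rcases eq_or_lt_of_le hx.1 with rfl | hx0
    · simp [h'def, hG0]
    · rcases eq_or_lt_of_le hx.2 with rfl | hxu
      · simp [h'def, not_le.mpr hx0, lt_irrefl, hGu]
      · simp [h'def, hGdef, not_le.mpr hx0, hxu]
  have hEq3' : ∀ x ∈ Ici u, h' x = 1 := fun x hx => by
    simp [h'def, not_le.mpr (lt_of_lt_of_le hu hx), not_lt.mpr (mem_Ici.mp hx)]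
  have hmem0 : Icc (0:ℝ) u ∈ nhdsWithin (0:ℝ) (Ici 0) := by
    rw [← Ici_inter_Iic]
    exact Filter.inter_mem self_mem_nhdsWithin
      (mem_nhdsWithin_of_mem_nhds (Iic_mem_nhds hu))
  have hmemu : Icc (0:ℝ) u ∈ nhdsWithin u (Iic u) := by
    rw [← Ici_inter_Iic]
    exact Filter.inter_mem
      (mem_nhdsWithin_of_mem_nhds (Ici_mem_nhds hu))
      self_mem_nhdsWithin
  -- the derivative
  have hd : ∀ s : ℝ, HasDerivAt h (h' s) s := by
    intro s
    rcases lt_trichotomy s 0 with hs | rfl | hs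
    · rw [hEq1' s hs]
      exact (hasDerivAt_const s (0:ℝ)).congr_of_eventuallyEq
        (Filter.eventuallyEq_of_mem (Iio_mem_nhds hs) hEq1)
    · have hv : h' 0 = 0 := by simp [h'def]
      rw [hv]
      have left : HasDerivWithinAt h 0 (Iic 0) 0 := by
        refine (hasDerivWithinAt_const (0:ℝ) (Iic 0) (0:ℝ)).congr ?_ (by simp [h])
        intro x hx
        simp [h, (mem_Iic.mp hx)]
      have right : HasDerivWithinAt h 0 (Ici 0) 0 := by
        have hgw : HasDerivWithinAt g (G 0) (Icc 0 u) 0 := (hG 0).hasDerivWithinAt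
        have hw : HasDerivWithinAt h (G 0) (Icc 0 u) 0 :=
          hgw.congr hEq2 (hEq2 0 ⟨le_refl 0, hu.le⟩)
        rw [hG0] at hw
        exact hw.mono_of_mem_nhdsWithin hmem0
      have hun := left.union right
      rw [Iic_union_Ici, hasDerivWithinAt_univ] at hun
      exact hun
    · rcases lt_trichotomy s u with hsu | rfl | hsu
      · have hv : h' s = G s := by simp [h'def, not_le.mpr hs, hsu]
        rw [hv]
        refine (hG s).congr_of_eventuallyEq
          (Filter.eventuallyEq_of_mem (Ioo_mem_nhds hs hsu) ?_)
        intro x hx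
        exact hEq2 x ⟨hx.1.le, hx.2.le⟩
      · have hv : h' s = 1 := by simp [h'def, not_le.mpr hs, lt_irrefl]
        rw [hv]
        have left : HasDerivWithinAt h 1 (Iic s) s := by
          have hgw : HasDerivWithinAt g (G s) (Icc 0 s) s := (hG s).hasDerivWithinAt
          have hw : HasDerivWithinAt h (G s) (Icc 0 s) s :=
            hgw.congr hEq2 (hEq2 s ⟨hu.le, le_refl s⟩)
          rw [hGu] at hw
          exact hw.mono_of_mem_nhdsWithin hmemu
        have right : HasDerivWithinAt h 1 (Ici s) s := by
          refine (hasDerivWithinAt_id s (Ici s)).congr hEq3 (hEq3 s (le_refl s))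
        have hun := left.union right
        rw [Iic_union_Ici, hasDerivWithinAt_univ] at hun
        exact hun
      · have hv : h' s = 1 := by simp [h'def, not_le.mpr hs, not_lt.mpr hsu.le]
        rw [hv]
        refine (hasDerivAt_id s).congr_of_eventuallyEq
          (Filter.eventuallyEq_of_mem (Ioi_mem_nhds hsu) ?_)
        intro x hx
        exact hEq3 x (mem_Ici.mpr (le_of_lt hx))
  have hGc : Continuous G := by
    rw [hGdef]
    exact ((continuous_const.mul (continuous_const.mul continuous_id)).div_const u).add
      ((continuous_const.mul (Real.continuous_rpow_const hδ0.le)).div_const _)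
  have h'c : Continuous h' := by
    rw [continuous_iff_continuousAt]
    intro s
    rcases lt_trichotomy s 0 with hs | rfl | hs
    · have hev : h' =ᶠ[nhds s] (fun _ => (0:ℝ)) :=
        Filter.eventuallyEq_of_mem (Iio_mem_nhds hs) hEq1'
      exact hev.continuousAt
    · have left : ContinuousWithinAt h' (Iic 0) 0 := by
        refine (continuousWithinAt_const (b := (0:ℝ))).congr ?_ (by simp [h'def])
        intro x hx
        simp [h'def, mem_Iic.mp hx]
      have right : ContinuousWithinAt h' (Ici 0) 0 := by
        have hw : ContinuousWithinAt h' (Icc 0 u) 0 :=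
          (hGc.continuousAt.continuousWithinAt).congr hEq2'
            (hEq2' 0 ⟨le_refl 0, hu.le⟩)
        exact hw.mono_of_mem_nhdsWithin hmem0
      have hun := left.union right
      rwa [Iic_union_Ici, continuousWithinAt_univ] at hun
    · rcases lt_trichotomy s u with hsu | rfl | hsu
      · have hev : h' =ᶠ[nhds s] G := Filter.eventuallyEq_of_mem (Ioo_mem_nhds hs hsu)
          (fun x hx => hEq2' x ⟨hx.1.le, hx.2.le⟩)
        exact hGc.continuousAt.congr hev.symm
      · have left : ContinuousWithinAt h' (Iic s) s := by
          have hw : ContinuousWithinAt h' (Icc 0 s) s :=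
            (hGc.continuousAt.continuousWithinAt).congr hEq2'
              (hEq2' s ⟨hu.le, le_refl s⟩)
          exact hw.mono_of_mem_nhdsWithin hmemu
        have right : ContinuousWithinAt h' (Ici s) s :=
          (continuousWithinAt_const (b := (1:ℝ))).congr hEq3' (hEq3' s (le_refl s))
        have hun := left.union right
        rwa [Iic_union_Ici, continuousWithinAt_univ] at hun
      · have hev : h' =ᶠ[nhds s] (fun _ => (1:ℝ)) :=
          Filter.eventuallyEq_of_mem (Ioi_mem_nhds hsu) (fun x hx => hEq3' x (mem_Ici.mpr (le_of_lt hx)))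
        exact hev.continuousAt
  have derh : deriv h = h' := funext fun s => (hd s).deriv
  refine ⟨?_, ?_, ?_, ?_⟩
  · exact contDiff_one_iff_deriv.mpr ⟨fun s => (hd s).differentiableAt, by rw [derh]; exact h'c⟩
  · simp [h]
  · exact hEq3 u (le_refl u)
  · intro s hs
    rw [derh]
    have hsne : s ≠ 0 := ne_of_gt hs.1
    -- second derivative of G
    have hG2 : HasDerivAt G
        (-(δ / (1 - δ)) * 2 / u + (1 + δ) * (δ * s ^ (δ - 1)) / (u ^ δ * (1 - δ))) s := by
      rw [hGdef]
      have h1 : HasDerivAt (fun s : ℝ => -(δ / (1 - δ)) * (2 * s) / u)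
          (-(δ / (1 - δ)) * 2 / u) s := by
        have := (((hasDerivAt_id s).const_mul (2:ℝ)).const_mul (-(δ / (1 - δ)))).div_const u
        refine this.congr_deriv ?_
        ring
      have h2 : HasDerivAt (fun s : ℝ => (1 + δ) * s ^ δ / (u ^ δ * (1 - δ)))
          ((1 + δ) * (δ * s ^ (δ - 1)) / (u ^ δ * (1 - δ))) s :=
        ((Real.hasDerivAt_rpow_const (Or.inl hsne)).const_mul (1 + δ)).div_const _
      exact h1.add h2
    have hEqG : deriv h' s
        = -(δ / (1 - δ)) * 2 / u + (1 + δ) * (δ * s ^ (δ - 1)) / (u ^ δ * (1 - δ)) := by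
      have hev : h' =ᶠ[nhds s] G := Filter.eventuallyEq_of_mem (Ioo_mem_nhds hs.1 hs.2)
        (fun x hx => hEq2' x ⟨hx.1.le, hx.2.le⟩)
      rw [hev.deriv_eq]
      exact hG2.deriv
    rw [hEqG]
    have hsd : s * s ^ (δ - 1) = s ^ δ := by
      rw [Real.rpow_sub hs.1, Real.rpow_one, mul_comm, div_mul_cancel₀ _ hsne]
    have key : s * (-(δ / (1 - δ)) * 2 / u + (1 + δ) * (δ * s ^ (δ - 1)) / (u ^ δ * (1 - δ)))
        = δ / (1 - δ) * (-2 * (s / u) + (1 + δ) * (s ^ δ / u ^ δ)) := by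
      rw [← hsd]
      field_simp
    have hA0 : (0:ℝ) ≤ s / u := div_nonneg hs.1.le hu.le
    have hA1 : s / u ≤ 1 := (div_le_one hu).mpr hs.2.le
    have hB0 : (0:ℝ) ≤ s ^ δ / u ^ δ := div_nonneg (Real.rpow_pos_of_pos hs.1 δ).le huδ.le
    have hB1 : s ^ δ / u ^ δ ≤ 1 := by
      rw [div_le_one huδ]
      exact Real.rpow_le_rpow hs.1.le hs.2.le hδ0.le
    calc s ^ 2 * (-(δ / (1 - δ)) * 2 / u + (1 + δ) * (δ * s ^ (δ - 1)) / (u ^ δ * (1 - δ))) ^ 2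
        = (s * (-(δ / (1 - δ)) * 2 / u + (1 + δ) * (δ * s ^ (δ - 1)) / (u ^ δ * (1 - δ)))) ^ 2 := by
          ring
      _ = (δ / (1 - δ) * (-2 * (s / u) + (1 + δ) * (s ^ δ / u ^ δ))) ^ 2 := by rw [key]
      _ ≤ 50 * δ ^ 2 := hdelta_aux δ (s / u) (s ^ δ / u ^ δ) hδ0 hδ hA0 hA1 hB0 hB1
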